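/- (Watari) For f ∈ L_p(G) with 1 ≤ p < ∞ and n ∈ ℕ: ‖f − S_{2^n}f‖_p/2 ≤ E_{2^n}(f, L_p) ≤ ‖f − S_{2^n}f‖_p, where E_{2^n}(f, L_p) is the best approximation of f by Walsh polynomials of order less than 2^n. -/

import Mathlib

open MeasureTheory Filter Finset
open scoped ENNReal NNReal

/-- The Walsh group `G = ∏ ℤ₂`. -/
abbrev WG := ℕ → ZMod 2

noncomputable section

/-- The `k`-th Rademacher function `r_k(x) = (-1)^{x_k}`. -/
def rad (k : ℕ) (x : WG) : ℝ := (-1 : ℝ) ^ (x k).val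

/-- The Walsh-Paley function `w_n(x) = (-1)^{∑ n_k x_k}`. -/
def walsh (n : ℕ) (x : WG) : ℝ :=
  (-1 : ℝ) ^ (∑ k ∈ Finset.range (n + 1), if n.testBit k then (x k).val else 0)

/-- The Walsh-Kaczmarz function
`κ_n(x) = r_{|n|}(x)·(-1)^{∑_{k<|n|} n_k x_{|n|-1-k}}`, `κ_0 = 1`,
where `|n| = Nat.log 2 n` is the position of the leading binary digit. -/
def kacz (n : ℕ) (x : WG) : ℝ :=
  if n = 0 then 1 else
    rad (Nat.log 2 n) x *
      (-1 : ℝ) ^ (∑ k ∈ Finset.range (Nat.log 2 n),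
        if n.testBit k then (x (Nat.log 2 n - 1 - k)).val else 0)

/-- Walsh-Paley Dirichlet kernel. -/
def Dw (n : ℕ) (x : WG) : ℝ := ∑ k ∈ Finset.range n, walsh k x

/-- Walsh-Kaczmarz Dirichlet kernel. -/
def Dk (n : ℕ) (x : WG) : ℝ := ∑ k ∈ Finset.range n, kacz k x

/-- Walsh-Fejér kernel `K_n = (1/n) ∑_{k=1}^n D_k`. -/
def Kw (n : ℕ) (x : WG) : ℝ := (1 / n : ℝ) * ∑ k ∈ Finset.Icc 1 n, Dw k x

/-- The transformation reversing the first `A` coordinates. -/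
def tau (A : ℕ) (x : WG) : WG := fun k => if k < A then x (A - 1 - k) else x k

/-- The dyadic interval (cylinder) `I_n(x)`. -/
def cyl (n : ℕ) (x : WG) : Set WG := {y | ∀ k < n, y k = x k}

/-- `I_n = I_n(0)`. -/
def In (n : ℕ) : Set WG := cyl n 0

/-- A measure `μ` on `WG` is the Haar (product) measure iff every cylinder of
level `n` has measure `2⁻ⁿ`. -/
def IsHaar (μ : Measure WG) : Prop :=
  ∀ (n : ℕ) (x : WG), μ (cyl n x) = (2 : ℝ≥0∞)⁻¹ ^ n

/-- Walsh-Fourier coefficient. -/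
def fhatW (μ : Measure WG) (f : WG → ℝ) (j : ℕ) : ℝ := ∫ x, f x * walsh j x ∂μ

/-- Walsh-Fourier partial sum `S_N f`. -/
def partialW (μ : Measure WG) (N : ℕ) (f : WG → ℝ) (x : WG) : ℝ :=
  ∑ j ∈ Finset.range N, fhatW μ f j * walsh j x

/-- Walsh-Kaczmarz-Fourier coefficient. -/
def fhatK (μ : Measure WG) (f : WG → ℝ) (j : ℕ) : ℝ := ∫ x, f x * kacz j x ∂μ

/-- Walsh-Kaczmarz-Fourier partial sum `S_N^κ f`. -/
def partialK (μ : Measure WG) (N : ℕ) (f : WG → ℝ) (x : WG) : ℝ :=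
  ∑ j ∈ Finset.range N, fhatK μ f j * kacz j x

/-- Walsh-Kaczmarz-Fejér mean `σ_n^κ f`. -/
def sigmaK (μ : Measure WG) (n : ℕ) (f : WG → ℝ) (x : WG) : ℝ :=
  (1 / n : ℝ) * ∑ j ∈ Finset.Icc 1 n, partialK μ j f x

end

noncomputable section

/-- Best approximation by Walsh polynomials of order `< N`. -/
noncomputable def bestApprox (μ : Measure WG) (p : ℝ≥0∞) (N : ℕ) (f : WG → ℝ) : ℝ≥0∞ :=
  ⨅ c : Fin N → ℝ, eLpNorm (fun x => f x - ∑ j : Fin N, c j * walsh j x) p μ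

namespace Watari

lemma walsh_measurable (j : ℕ) : Measurable (walsh j) := by
  unfold walsh
  apply Measurable.comp (measurable_of_countable _)
  apply Finset.measurable_sum
  intro k _
  by_cases h : j.testBit k <;> simp [h]
  exact (measurable_of_countable _).comp (measurable_pi_apply k)

lemma cyl_measurableSet (n : ℕ) (x : WG) : MeasurableSet (cyl n x) := by
  have : cyl n x = ⋂ k ∈ Finset.range n, (fun y : WG => y k) ⁻¹' {x k} := by
    ext y; simp [cyl]
  rw [this]
  exact MeasurableSet.biInter (Finset.range n).countable_toSet fun k _ =>
    (measurable_pi_apply k) (MeasurableSet.singleton (x k))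

lemma abs_walsh (j : ℕ) (x : WG) : |walsh j x| = 1 := by
  unfold walsh
  rw [abs_pow, abs_neg, abs_one, one_pow]

lemma testBit_false {j m k : ℕ} (hj : j < 2 ^ m) (hk : m ≤ k) : j.testBit k = false :=
  Nat.testBit_lt_two_pow (lt_of_lt_of_le hj (Nat.pow_le_pow_right (by norm_num) hk))

lemma walsh_eq_prod {m j : ℕ} (hj : j < 2 ^ m) (x : WG) :
    walsh j x = ∏ k ∈ Finset.range m, (if j.testBit k then (-1 : ℝ) ^ ((x k).val) else 1) := by
  unfold walsh
  rw [← Finset.prod_pow_eq_pow_sum]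
  have hfac : ∀ k, (-1 : ℝ) ^ (if j.testBit k then (x k).val else 0)
      = (if j.testBit k then (-1 : ℝ) ^ ((x k).val) else 1) := by
    intro k; by_cases h : j.testBit k <;> simp [h]
  simp_rw [hfac]
  set F : ℕ → ℝ := fun k => if j.testBit k then (-1 : ℝ) ^ ((x k).val) else 1 with hF
  have key : ∀ {a : ℕ}, (∀ k, a ≤ k → j.testBit k = false) →
      ∏ k ∈ Finset.range a, F k = ∏ k ∈ Finset.range (max (j+1) m), F k := by
    intro a ha
    rcases le_total a (max (j+1) m) with h | h
    · exact Finset.prod_subset (Finset.range_subset_range.mpr h) (fun k _ hk => by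
        simp only [Finset.mem_range, not_lt] at hk
        simp [hF, ha k hk])
    · refine (Finset.prod_subset (Finset.range_subset_range.mpr h) (fun k _ hk => ?_)).symm
      simp only [Finset.mem_range, not_lt] at hk
      have hb : j.testBit k = false := by
        apply Nat.testBit_lt_two_pow
        have hk' : j + 1 ≤ k := le_trans (le_max_left (j+1) m) hk
        calc j < j + 1 := Nat.lt_succ_self j
        _ ≤ k := hk'
        _ < 2 ^ k := Nat.lt_two_pow_self
      simp [hF, hb]
  rw [key (fun k hk => Nat.testBit_lt_two_pow (by
      calc j < j + 1 := Nat.lt_succ_self j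
      _ ≤ k := hk
      _ < 2 ^ k := Nat.lt_two_pow_self)),
    key (fun k hk => testBit_false hj hk)]

lemma sum_prod_bits (m : ℕ) (s : ℕ → ℝ) :
    ∑ j ∈ Finset.range (2 ^ m), ∏ k ∈ Finset.range m, (if j.testBit k then s k else 1)
      = ∏ k ∈ Finset.range m, (1 + s k) := by
  induction m with
  | zero => simp
  | succ m ih =>
    have h2 : 2 ^ (m + 1) = 2 ^ m + 2 ^ m := by ring
    rw [h2, Finset.sum_range_add]
    have e1 : ∀ j ∈ Finset.range (2 ^ m),
        ∏ k ∈ Finset.range (m+1), (if j.testBit k then s k else 1)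
          = ∏ k ∈ Finset.range m, (if j.testBit k then s k else 1) := by
      intro j hj
      rw [Finset.prod_range_succ, testBit_false (Finset.mem_range.mp hj) le_rfl]
      simp
    have e2 : ∀ j ∈ Finset.range (2 ^ m),
        ∏ k ∈ Finset.range (m+1), (if (2 ^ m + j).testBit k then s k else 1)
          = s m * ∏ k ∈ Finset.range m, (if j.testBit k then s k else 1) := by
      intro j hj
      rw [Finset.prod_range_succ, Nat.testBit_two_pow_add_eq,
        testBit_false (Finset.mem_range.mp hj) le_rfl]
      simp only [Bool.not_false, if_true]
      rw [mul_comm]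
      congr 1
      apply Finset.prod_congr rfl
      intro k hk
      rw [Nat.testBit_two_pow_add_gt (Finset.mem_range.mp hk)]
    rw [Finset.sum_congr rfl e1, Finset.sum_congr rfl e2, ← Finset.mul_sum, ih,
      Finset.prod_range_succ]
    ring

lemma kernel_sum (m : ℕ) (a y : WG) :
    ∑ j ∈ Finset.range (2 ^ m), walsh j y * walsh j a
      = ∏ k ∈ Finset.range m, (1 + (-1 : ℝ) ^ ((y k).val) * (-1 : ℝ) ^ ((a k).val)) := by
  have key : ∀ j ∈ Finset.range (2 ^ m), walsh j y * walsh j a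
      = ∏ k ∈ Finset.range m,
          (if j.testBit k then (-1 : ℝ) ^ ((y k).val) * (-1 : ℝ) ^ ((a k).val) else 1) := by
    intro j hj
    rw [walsh_eq_prod (Finset.mem_range.mp hj), walsh_eq_prod (Finset.mem_range.mp hj),
      ← Finset.prod_mul_distrib]
    apply Finset.prod_congr rfl
    intro k _
    by_cases h : j.testBit k <;> simp [h]
  rw [Finset.sum_congr rfl key, sum_prod_bits]

lemma kernel_mem {m : ℕ} {a y : WG} (hy : y ∈ cyl m a) :
    ∑ j ∈ Finset.range (2 ^ m), walsh j y * walsh j a = (2 : ℝ) ^ m := by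
  rw [kernel_sum]
  have : ∀ k ∈ Finset.range m, (1 + (-1 : ℝ) ^ ((y k).val) * (-1 : ℝ) ^ ((a k).val)) = 2 := by
    intro k hk
    rw [hy k (Finset.mem_range.mp hk), ← pow_add]
    rw [Even.neg_one_pow ⟨(a k).val, by ring⟩]
    norm_num
  rw [Finset.prod_congr rfl this, Finset.prod_const, Finset.card_range]

lemma kernel_not_mem {m : ℕ} {a y : WG} (hy : y ∉ cyl m a) :
    ∑ j ∈ Finset.range (2 ^ m), walsh j y * walsh j a = 0 := by
  rw [kernel_sum]
  simp only [cyl, Set.mem_setOf_eq, not_forall] at hy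
  obtain ⟨k, hk, hne⟩ := hy
  apply Finset.prod_eq_zero (Finset.mem_range.mpr hk)
  have hvals : ((y k).val + (a k).val) = 1 := by
    have h1 := ZMod.val_lt (y k)
    have h2 := ZMod.val_lt (a k)
    have h3 : (y k).val ≠ (a k).val := fun h => hne (ZMod.val_injective 2 h)
    omega
  rw [← pow_add, hvals]
  norm_num

lemma cyl_eq_of_mem {m : ℕ} {y x : WG} (h : y ∈ cyl m x) : cyl m y = cyl m x := by
  ext z
  constructor <;> intro hz k hk
  · rw [hz k hk, h k hk]
  · rw [hz k hk, h k hk]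

lemma walsh_const_on {m j : ℕ} (hj : j < 2 ^ m) {y a : WG} (h : y ∈ cyl m a) :
    walsh j y = walsh j a := by
  rw [walsh_eq_prod hj, walsh_eq_prod hj]
  exact Finset.prod_congr rfl fun k hk => by rw [h k (Finset.mem_range.mp hk)]

lemma isProb {μ : Measure WG} (hμ : IsHaar μ) : IsProbabilityMeasure μ := by
  constructor
  have h := hμ 0 0
  have he : cyl 0 0 = Set.univ := by
    ext y; simp [cyl]
  rw [he] at h
  simpa using h

lemma toReal_measure_cyl {μ : Measure WG} (hμ : IsHaar μ) (m : ℕ) (a : WG) :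
    (μ (cyl m a)).toReal = (2 : ℝ)⁻¹ ^ m := by
  rw [hμ m a, ENNReal.toReal_pow, ENNReal.toReal_inv]
  norm_num

lemma integrable_of_bdd {μ : Measure WG} [IsFiniteMeasure μ] {h : WG → ℝ}
    (hm : Measurable h) {C : ℝ} (hb : ∀ x, ‖h x‖ ≤ C) : Integrable h μ :=
  (integrable_const C).mono' hm.aestronglyMeasurable (Filter.Eventually.of_forall hb)

lemma integrable_mul_walsh {μ : Measure WG} {g : WG → ℝ} (hg : Integrable g μ) (j : ℕ) :
    Integrable (fun y => g y * walsh j y) μ := by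
  have h := hg.bdd_mul (walsh_measurable j).aestronglyMeasurable
    (c := 1) (Filter.Eventually.of_forall fun x => by rw [Real.norm_eq_abs, abs_walsh])
  simpa [mul_comm] using h

lemma measurable_partialW (μ : Measure WG) (N : ℕ) (g : WG → ℝ) :
    Measurable (partialW μ N g) := by
  unfold partialW
  exact Finset.measurable_sum _ fun j _ => (walsh_measurable j).const_mul _

/-- The key identity: `S_{2^m} g (a) = 2^m ∫_{I_m(a)} g`. -/
lemma partialW_eq_setIntegral {μ : Measure WG} {g : WG → ℝ} (hg : Integrable g μ)
    (m : ℕ) (a : WG) :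
    partialW μ (2 ^ m) g a = (2 : ℝ) ^ m * ∫ y in cyl m a, g y ∂μ := by
  unfold partialW fhatW
  have step1 : ∀ j ∈ Finset.range (2 ^ m), (∫ y, g y * walsh j y ∂μ) * walsh j a
      = ∫ y, g y * walsh j y * walsh j a ∂μ := fun j _ => (integral_mul_const _ _).symm
  rw [Finset.sum_congr rfl step1,
    ← integral_finset_sum _ (fun j _ => (integrable_mul_walsh hg j).mul_const _)]
  have ptw : ∀ y, ∑ j ∈ Finset.range (2 ^ m), g y * walsh j y * walsh j a
      = (cyl m a).indicator (fun y => (2 : ℝ) ^ m * g y) y := by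
    intro y
    have hassoc : ∑ j ∈ Finset.range (2 ^ m), g y * walsh j y * walsh j a
        = g y * ∑ j ∈ Finset.range (2 ^ m), walsh j y * walsh j a := by
      rw [Finset.mul_sum]; exact Finset.sum_congr rfl fun j _ => by ring
    by_cases h : y ∈ cyl m a
    · rw [Set.indicator_of_mem h, hassoc, kernel_mem h]; ring
    · rw [Set.indicator_of_notMem h, hassoc, kernel_not_mem h, mul_zero]
  rw [integral_congr_ae (Filter.Eventually.of_forall ptw),
    integral_indicator (cyl_measurableSet m a), integral_const_mul]

/-- `S_{2^m}` reproduces Walsh polynomials of order `< 2^m`. -/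
lemma partialW_poly {μ : Measure WG} (hμ : IsHaar μ)
    {ψ : WG → ℝ} (hψ : Integrable ψ μ) (m : ℕ)
    (hconst : ∀ a : WG, ∀ y ∈ cyl m a, ψ y = ψ a) (a : WG) :
    partialW μ (2 ^ m) ψ a = ψ a := by
  rw [partialW_eq_setIntegral hψ m a]
  rw [setIntegral_congr_fun (cyl_measurableSet m a) (fun y hy => hconst a y hy),
    setIntegral_const, measureReal_def, toReal_measure_cyl hμ, smul_eq_mul, ← mul_assoc, ← mul_pow]
  norm_num

section Atoms

variable (m : ℕ)

/-- Extend a finite word to an element of `WG` by zeros. -/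
def emb (b : Fin m → ZMod 2) : WG := fun k => if h : k < m then b ⟨k, h⟩ else 0

lemma mem_atom (x : WG) : x ∈ cyl m (emb m (fun i => x i)) := by
  intro k hk
  simp [emb, hk]

lemma atoms_cover :
    (⋃ b ∈ (Finset.univ : Finset (Fin m → ZMod 2)), cyl m (emb m b)) = Set.univ := by
  ext x
  simp only [Set.mem_iUnion, Set.mem_univ, iff_true, Finset.mem_univ, Set.iUnion_true]
  exact ⟨fun i => x i, mem_atom m x⟩

lemma atoms_disjoint :
    (↑(Finset.univ : Finset (Fin m → ZMod 2)) : Set (Fin m → ZMod 2)).PairwiseDisjoint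
      (fun b => cyl m (emb m b)) := by
  intro b _ b' _ hbb'
  rw [Function.onFun, Set.disjoint_left]
  intro z hz hz'
  apply hbb'
  funext i
  have h1 := hz i i.isLt
  have h2 := hz' i i.isLt
  rw [h1] at h2
  simp only [emb, i.isLt, dif_pos] at h2
  exact h2

lemma lintegral_eq_sum_atoms (μ : Measure WG) (h : WG → ℝ≥0∞) :
    ∫⁻ x, h x ∂μ = ∑ b : Fin m → ZMod 2, ∫⁻ x in cyl m (emb m b), h x ∂μ := by
  rw [← setLIntegral_univ, ← atoms_cover m,
    lintegral_biUnion_finset (atoms_disjoint m) (fun b _ => cyl_measurableSet m (emb m b))]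

end Atoms

/-- `S_{2^m}` is an `L^p` contraction. -/
lemma contraction {μ : Measure WG} (hμ : IsHaar μ) {p : ℝ≥0∞} (hp : 1 ≤ p) (hp' : p ≠ ∞)
    {g : WG → ℝ} (hg : Integrable g μ) (m : ℕ) :
    eLpNorm (partialW μ (2 ^ m) g) p μ ≤ eLpNorm g p μ := by
  have hp0 : p ≠ 0 := fun h => by simp [h] at hp
  set q := p.toReal with hq
  have hq1 : 1 ≤ q := by
    rw [hq, ← ENNReal.toReal_one]
    exact ENNReal.toReal_mono hp' hp
  have hq0 : 0 < q := lt_of_lt_of_le one_pos hq1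
  rw [eLpNorm_eq_lintegral_rpow_enorm_toReal hp0 hp', eLpNorm_eq_lintegral_rpow_enorm_toReal hp0 hp']
  apply ENNReal.rpow_le_rpow _ (by positivity)
  have pow_alg : ((2 : ℝ≥0∞) ^ m) ^ q * (((2 : ℝ≥0∞)⁻¹ ^ m) ^ (1 - 1 / q)) ^ q
      = 2 ^ m := by
    rw [← ENNReal.rpow_natCast ((2:ℝ≥0∞)⁻¹) m, ← ENNReal.rpow_natCast (2:ℝ≥0∞) m,
      ENNReal.inv_rpow, ← ENNReal.rpow_neg, ← ENNReal.rpow_mul, ← ENNReal.rpow_mul,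
      ← ENNReal.rpow_mul, ← ENNReal.rpow_add _ _ (by norm_num) (by norm_num)]
    have hexp : (m : ℝ) * q + -(m : ℝ) * ((1 - 1 / q) * q) = (m : ℝ) := by
      field_simp
      ring
    rw [hexp, ENNReal.rpow_natCast]
  -- pointwise bound
  have ptw : ∀ x : WG, (‖partialW μ (2 ^ m) g x‖₊ : ℝ≥0∞) ^ q
      ≤ 2 ^ m * ∫⁻ y in cyl m x, (‖g y‖₊ : ℝ≥0∞) ^ q ∂μ := by
    intro x
    set I : ℝ≥0∞ := ∫⁻ y in cyl m x, (‖g y‖₊ : ℝ≥0∞) ^ q ∂μ with hI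
    have hnorm : (‖partialW μ (2 ^ m) g x‖₊ : ℝ≥0∞)
        ≤ 2 ^ m * ∫⁻ y in cyl m x, (‖g y‖₊ : ℝ≥0∞) ∂μ := by
      rw [partialW_eq_setIntegral hg m x]
      calc (‖(2:ℝ) ^ m * ∫ y in cyl m x, g y ∂μ‖₊ : ℝ≥0∞)
          = (2 : ℝ≥0∞) ^ m * (‖∫ y in cyl m x, g y ∂μ‖₊ : ℝ≥0∞) := by
            rw [nnnorm_mul]
            push_cast
            congr 1
            simp [nnnorm_pow]
        _ ≤ 2 ^ m * ∫⁻ y in cyl m x, (‖g y‖₊ : ℝ≥0∞) ∂μ :=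
            mul_le_mul_right (enorm_integral_le_lintegral_enorm _) _
    have holder : (∫⁻ y in cyl m x, (‖g y‖₊ : ℝ≥0∞) ∂μ)
        ≤ I ^ (1 / q) * ((2 : ℝ≥0∞)⁻¹ ^ m) ^ (1 - 1 / q) := by
      have h1 := eLpNorm_le_eLpNorm_mul_rpow_measure_univ (μ := μ.restrict (cyl m x)) hp
        hg.aestronglyMeasurable.restrict
      rw [eLpNorm_one_eq_lintegral_enorm, eLpNorm_eq_lintegral_rpow_enorm_toReal hp0 hp',
        Measure.restrict_apply_univ, hμ m x] at h1
      simp at h1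
      simp only [one_div]
      exact h1
    calc (‖partialW μ (2 ^ m) g x‖₊ : ℝ≥0∞) ^ q
        ≤ (2 ^ m * (I ^ (1 / q) * ((2 : ℝ≥0∞)⁻¹ ^ m) ^ (1 - 1 / q))) ^ q :=
          ENNReal.rpow_le_rpow (hnorm.trans (mul_le_mul_right holder _)) (le_of_lt hq0)
      _ = ((2 : ℝ≥0∞) ^ m) ^ q * (((2 : ℝ≥0∞)⁻¹ ^ m) ^ (1 - 1 / q)) ^ q * (I ^ (1 / q)) ^ q := by
          rw [ENNReal.mul_rpow_of_nonneg _ _ (le_of_lt hq0),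
            ENNReal.mul_rpow_of_nonneg _ _ (le_of_lt hq0)]
          ring
      _ = 2 ^ m * I := by
          rw [pow_alg, ← ENNReal.rpow_mul, one_div, inv_mul_cancel₀ (ne_of_gt hq0),
            ENNReal.rpow_one]
  calc ∫⁻ x, (‖partialW μ (2 ^ m) g x‖₊ : ℝ≥0∞) ^ q ∂μ
      ≤ ∫⁻ x, 2 ^ m * ∫⁻ y in cyl m x, (‖g y‖₊ : ℝ≥0∞) ^ q ∂μ ∂μ := lintegral_mono ptw
    _ = ∑ b : Fin m → ZMod 2, ∫⁻ x in cyl m (emb m b),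
          (2 ^ m * ∫⁻ y in cyl m x, (‖g y‖₊ : ℝ≥0∞) ^ q ∂μ) ∂μ :=
        lintegral_eq_sum_atoms m μ _
    _ = ∑ b : Fin m → ZMod 2, ∫⁻ y in cyl m (emb m b), (‖g y‖₊ : ℝ≥0∞) ^ q ∂μ := by
        refine Finset.sum_congr rfl fun b _ => ?_
        have hcongr : ∀ x ∈ cyl m (emb m b),
            (2 ^ m * ∫⁻ y in cyl m x, (‖g y‖₊ : ℝ≥0∞) ^ q ∂μ)
              = 2 ^ m * ∫⁻ y in cyl m (emb m b), (‖g y‖₊ : ℝ≥0∞) ^ q ∂μ := by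
          intro x hx
          rw [cyl_eq_of_mem hx]
        rw [setLIntegral_congr_fun (cyl_measurableSet m (emb m b))
          hcongr, setLIntegral_const, hμ m (emb m b)]
        rw [mul_comm, ← mul_assoc]
        have hone : (2 : ℝ≥0∞)⁻¹ ^ m * 2 ^ m = 1 := by
          rw [← mul_pow, ENNReal.inv_mul_cancel (by norm_num) (by norm_num), one_pow]
        rw [hone, one_mul]
    _ = ∫⁻ x, (‖g x‖₊ : ℝ≥0∞) ^ q ∂μ := (lintegral_eq_sum_atoms m μ _).symm

end Watari


open Watari in
/-- Watari: `‖f − S_{2^n}f‖_p/2 ≤ E_{2^n}(f,L_p) ≤ ‖f − S_{2^n}f‖_p`. -/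
theorem watari_best_approx (μ : Measure WG) (hμ : IsHaar μ) (p : ℝ≥0∞)
    (hp : 1 ≤ p) (hp' : p ≠ ∞) (f : WG → ℝ) (hf : MemLp f p μ) (n : ℕ) :
    eLpNorm (fun x => f x - partialW μ (2 ^ n) f x) p μ / 2 ≤ bestApprox μ p (2 ^ n) f ∧
      bestApprox μ p (2 ^ n) f ≤ eLpNorm (fun x => f x - partialW μ (2 ^ n) f x) p μ := by
  haveI : IsProbabilityMeasure μ := isProb hμ
  have hfi : Integrable f μ := hf.integrable hp
  constructor
  · -- lower bound
    refine le_iInf fun c => ?_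
    set ψ : WG → ℝ := fun x => ∑ j : Fin (2 ^ n), c j * walsh j x with hψdef
    have hψm : Measurable ψ :=
      Finset.measurable_sum _ fun j _ => (walsh_measurable (j : ℕ)).const_mul _
    have hψint : Integrable ψ μ := by
      refine integrable_of_bdd hψm (C := ∑ j : Fin (2 ^ n), |c j|) fun x => ?_
      rw [Real.norm_eq_abs, hψdef]
      refine (Finset.abs_sum_le_sum_abs _ _).trans (Finset.sum_le_sum fun j _ => ?_)
      rw [abs_mul, abs_walsh, mul_one]
    have hconst : ∀ a : WG, ∀ y ∈ cyl n a, ψ y = ψ a := by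
      intro a y hy
      exact Finset.sum_congr rfl fun j _ => by rw [walsh_const_on j.isLt hy]
    have hgint : Integrable (fun x => f x - ψ x) μ := hfi.sub hψint
    have hcoef : ∀ j : ℕ, fhatW μ (fun x => f x - ψ x) j = fhatW μ f j - fhatW μ ψ j := by
      intro j
      unfold fhatW
      rw [← integral_sub (integrable_mul_walsh hfi j) (integrable_mul_walsh hψint j)]
      exact integral_congr_ae (Filter.Eventually.of_forall fun y => by ring)
    have hlin : ∀ a, partialW μ (2 ^ n) (fun x => f x - ψ x) a
        = partialW μ (2 ^ n) f a - ψ a := by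
      intro a
      have h1 : partialW μ (2 ^ n) (fun x => f x - ψ x) a
          = partialW μ (2 ^ n) f a - partialW μ (2 ^ n) ψ a := by
        unfold partialW
        rw [← Finset.sum_sub_distrib]
        exact Finset.sum_congr rfl fun j _ => by rw [hcoef j, sub_mul]
      rw [h1, partialW_poly hμ hψint n hconst a]
    have hkey : (fun x => f x - partialW μ (2 ^ n) f x)
        = fun x => (f x - ψ x) - partialW μ (2 ^ n) (fun y => f y - ψ y) x := by
      funext x
      rw [hlin x]
      ring
    rw [ENNReal.div_le_iff_le_mul (Or.inl two_ne_zero) (Or.inl ENNReal.ofNat_ne_top), hkey]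
    calc eLpNorm (fun x => (f x - ψ x) - partialW μ (2 ^ n) (fun y => f y - ψ y) x) p μ
        ≤ eLpNorm (fun x => f x - ψ x) p μ
            + eLpNorm (partialW μ (2 ^ n) (fun y => f y - ψ y)) p μ :=
          eLpNorm_sub_le hgint.aestronglyMeasurable
            (measurable_partialW μ (2 ^ n) _).aestronglyMeasurable hp
      _ ≤ eLpNorm (fun x => f x - ψ x) p μ + eLpNorm (fun x => f x - ψ x) p μ :=
          add_le_add_right (contraction hμ hp hp' hgint n) _
      _ = eLpNorm (fun x => f x - ψ x) p μ * 2 := by rw [← two_mul, mul_comm]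
  · -- upper bound
    refine iInf_le_of_le (fun j => fhatW μ f (j : ℕ)) (le_of_eq ?_)
    congr 1
    funext x
    congr 1
    rw [Fin.sum_univ_eq_sum_range (fun j => fhatW μ f j * walsh j x) (2 ^ n)]
    rfl


end
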